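/- arXiv:math/0411106 — 2 statements merged into one kernel-verified Lean document; each statement's English description precedes it below -/
import Mathlib

section
/- The sequence gₙ = V_{n+1}/Vₙ, where Vₙ is the volume of the Euclidean n-ball of radius √n/2 circumscribing the unit hypercube, converges as n → ∞ to the constant √(πe/2). -/
open Real MeasureTheory Filter

/-- `V n` is the volume of the Euclidean `n`-ball of radius `√n/2`, the ball
circumscribing the unit hypercube in `n` dimensions. -/
noncomputable def circumVol (n : ℕ) : ℝ :=
  (volume (Metric.closedBall (0 : EuclideanSpace ℝ (Fin n)) (Real.sqrt n / 2))).toReal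

section aux

open Set

lemma gamma_mid_sq_le {x y : ℝ} (hx : 0 < x) (hy : 0 < y) :
    Gamma ((x + y) / 2) ^ 2 ≤ Gamma x * Gamma y := by
  have h := Real.convexOn_log_Gamma.2 (mem_Ioi.mpr hx) (mem_Ioi.mpr hy)
    (by norm_num : (0:ℝ) ≤ (1:ℝ)/2) (by norm_num : (0:ℝ) ≤ (1:ℝ)/2) (by norm_num)
  simp only [Function.comp, smul_eq_mul] at h
  have hmid : (1/2 : ℝ) * x + (1/2 : ℝ) * y = (x + y) / 2 := by ring
  rw [hmid] at h
  have h2 : 2 * log (Gamma ((x+y)/2)) ≤ log (Gamma x) + log (Gamma y) := by linarith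
  have hgx := Real.Gamma_pos_of_pos hx
  have hgy := Real.Gamma_pos_of_pos hy
  have hgm := Real.Gamma_pos_of_pos (by linarith : (0:ℝ) < (x+y)/2)
  calc Gamma ((x+y)/2) ^ 2 = exp (2 * log (Gamma ((x+y)/2))) := by
        rw [two_mul, exp_add, exp_log hgm]; ring
    _ ≤ exp (log (Gamma x) + log (Gamma y)) := exp_le_exp.mpr h2
    _ = Gamma x * Gamma y := by rw [exp_add, exp_log hgx, exp_log hgy]

lemma gamma_half_upper {x : ℝ} (hx : 0 < x) : Gamma (x + 1/2) ≤ Gamma x * Real.sqrt x := by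
  have h := gamma_mid_sq_le hx (by linarith : (0:ℝ) < x + 1)
  rw [show (x + (x+1))/2 = x + 1/2 by ring, Real.Gamma_add_one hx.ne'] at h
  have h2 : Gamma (x + 1/2) ^ 2 ≤ (Gamma x * Real.sqrt x) ^ 2 := by
    rw [mul_pow, sq_sqrt hx.le]; nlinarith [Real.Gamma_pos_of_pos hx]
  have h3 := Real.sqrt_le_sqrt h2
  rwa [Real.sqrt_sq (Real.Gamma_pos_of_pos (by linarith : (0:ℝ) < x + 1/2)).le,
    Real.sqrt_sq (by positivity)] at h3

lemma gamma_half_lower {x : ℝ} (hx : 0 < x) :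
    x * Gamma x ≤ Gamma (x + 1/2) * Real.sqrt (x + 1/2) := by
  have h := gamma_mid_sq_le (by linarith : (0:ℝ) < x + 1/2) (by linarith : (0:ℝ) < x + 3/2)
  rw [show (x + 1/2 + (x + 3/2))/2 = x + 1 by ring, Real.Gamma_add_one hx.ne',
    show x + 3/2 = (x + 1/2) + 1 by ring,
    Real.Gamma_add_one (by positivity : (x + 1/2 : ℝ) ≠ 0)] at h
  have h2 : (x * Gamma x) ^ 2 ≤ (Gamma (x + 1/2) * Real.sqrt (x + 1/2)) ^ 2 := by
    rw [mul_pow, mul_pow, sq_sqrt (by linarith : (0:ℝ) ≤ x + 1/2)]; nlinarith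
  have h3 := Real.sqrt_le_sqrt h2
  rwa [Real.sqrt_sq (by positivity), Real.sqrt_sq (by positivity)] at h3

lemma sqrt_pow_eq_rpow {x : ℝ} (hx : 0 ≤ x) (m : ℕ) :
    Real.sqrt x ^ m = x ^ ((m:ℝ)/2) := by
  rw [Real.sqrt_eq_rpow, ← Real.rpow_natCast (x ^ ((1:ℝ)/2)) m, ← Real.rpow_mul hx]
  congr 1; ring

lemma circumVol_eq {n : ℕ} (hn : 0 < n) :
    circumVol n = (Real.sqrt n / 2) ^ n * (Real.sqrt π ^ n / Gamma ((n : ℝ) / 2 + 1)) := by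
  have : Nonempty (Fin n) := Fin.pos_iff_nonempty.mp hn
  have hg : 0 < Gamma ((n : ℝ) / 2 + 1) := Real.Gamma_pos_of_pos (by positivity)
  rw [circumVol, EuclideanSpace.volume_closedBall, Fintype.card_fin,
    ← ENNReal.ofReal_pow (by positivity), ← ENNReal.ofReal_mul (by positivity),
    ENNReal.toReal_ofReal (by positivity)]

lemma ratio_eq {n : ℕ} (hn : 0 < n) :
    circumVol (n+1) / circumVol n
      = (Real.sqrt π / 2) * ((((n:ℝ)+1)/n) ^ ((n:ℝ)/2) * Real.sqrt (((n:ℝ)+1)/((n:ℝ)/2+1)))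
        * (Real.sqrt ((n:ℝ)/2+1) * Gamma ((n:ℝ)/2+1) / Gamma ((n:ℝ)/2+3/2)) := by
  have hN : (0:ℝ) < n := Nat.cast_pos.mpr hn
  have hpush : ((n+1:ℕ):ℝ) = (n:ℝ) + 1 := by push_cast; ring
  rw [circumVol_eq (Nat.succ_pos n), circumVol_eq hn, hpush,
    show ((n:ℝ)+1)/2 + 1 = (n:ℝ)/2 + 3/2 by ring]
  have h1 : (Real.sqrt n) ^ n = (n:ℝ) ^ ((n:ℝ)/2) := sqrt_pow_eq_rpow hN.le n
  have h2 : (Real.sqrt ((n:ℝ)+1)) ^ (n+1)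
      = ((n:ℝ)+1) ^ ((n:ℝ)/2) * Real.sqrt ((n:ℝ)+1) := by
    rw [show ((n:ℝ)+1) = ((n+1:ℕ):ℝ) from hpush.symm, sqrt_pow_eq_rpow (by positivity) (n+1),
      hpush, show ((n:ℝ) + 1) / 2 = (n:ℝ)/2 + 1/2 by ring,
      Real.rpow_add (by positivity), ← Real.sqrt_eq_rpow]
  have h3 : (((n:ℝ)+1)/n) ^ ((n:ℝ)/2) = ((n:ℝ)+1) ^ ((n:ℝ)/2) / (n:ℝ) ^ ((n:ℝ)/2) :=
    Real.div_rpow (by positivity) hN.le _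
  have h4 : Real.sqrt (((n:ℝ)+1)/((n:ℝ)/2+1))
      = Real.sqrt ((n:ℝ)+1) / Real.sqrt ((n:ℝ)/2+1) := Real.sqrt_div (by positivity) _
  rw [div_pow, div_pow, h1, h2, h3, h4, pow_succ, pow_succ]
  have hg1 : (0:ℝ) < Gamma ((n:ℝ)/2 + 1) := Real.Gamma_pos_of_pos (by positivity)
  have hg2 : (0:ℝ) < Gamma ((n:ℝ)/2 + 3/2) := Real.Gamma_pos_of_pos (by positivity)
  have hb : (0:ℝ) < (n:ℝ) ^ ((n:ℝ)/2) := by positivity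
  have hp : (0:ℝ) < Real.sqrt π := Real.sqrt_pos.mpr pi_pos
  have ht : (0:ℝ) < Real.sqrt ((n:ℝ)/2+1) := by positivity
  field_simp

lemma tendsto_B :
    Tendsto (fun n : ℕ => (((n:ℝ)+1)/n) ^ ((n:ℝ)/2)) atTop (nhds (Real.sqrt (exp 1))) := by
  have hhalf : Tendsto (fun n : ℕ => (n:ℝ)/2) atTop atTop :=
    (tendsto_natCast_atTop_atTop (R := ℝ)).atTop_div_const two_pos
  have h := (tendsto_one_add_div_rpow_exp (1/2)).comp hhalf
  have hex : Real.exp (1/2) = Real.sqrt (exp 1) := by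
    rw [show Real.exp 1 = Real.exp (1/2) * Real.exp (1/2) by rw [← Real.exp_add]; norm_num,
      Real.sqrt_mul_self (Real.exp_pos _).le]
  rw [hex] at h
  refine h.congr' ?_
  filter_upwards [eventually_ge_atTop 1] with n hn
  have hN : (0:ℝ) < n := Nat.cast_pos.mpr hn
  simp only [Function.comp]
  congr 1
  field_simp

lemma tendsto_D :
    Tendsto (fun n : ℕ => Real.sqrt (((n:ℝ)+1)/((n:ℝ)/2+1))) atTop
      (nhds (Real.sqrt 2)) := by
  have hin : Tendsto (fun n : ℕ => (((n:ℝ)+1)/((n:ℝ)/2+1))) atTop (nhds 2) := by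
    have h0 : Tendsto (fun n : ℕ => (2:ℝ)/((n:ℝ)+2)) atTop (nhds 0) :=
      Tendsto.div_atTop tendsto_const_nhds
        (tendsto_atTop_add_const_right _ 2 (tendsto_natCast_atTop_atTop (R := ℝ)))
    have := (tendsto_const_nhds (x := (2:ℝ)) (f := atTop)).sub h0
    rw [sub_zero] at this
    refine this.congr fun n => ?_
    have : (0:ℝ) < (n:ℝ) + 2 := by positivity
    field_simp
    ring
  exact (Real.continuous_sqrt.tendsto 2).comp hin

lemma tendsto_C :
    Tendsto (fun n : ℕ =>
        Real.sqrt ((n:ℝ)/2+1) * Gamma ((n:ℝ)/2+1) / Gamma ((n:ℝ)/2+3/2)) atTop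
      (nhds 1) := by
  have hub : Tendsto (fun n : ℕ => Real.sqrt (((n:ℝ)/2+3/2)/((n:ℝ)/2+1))) atTop (nhds 1) := by
    have hin : Tendsto (fun n : ℕ => (((n:ℝ)/2+3/2)/((n:ℝ)/2+1))) atTop (nhds 1) := by
      have h0 : Tendsto (fun n : ℕ => (1:ℝ)/((n:ℝ)+2)) atTop (nhds 0) :=
        Tendsto.div_atTop tendsto_const_nhds
          (tendsto_atTop_add_const_right _ 2 (tendsto_natCast_atTop_atTop (R := ℝ)))
      have := (tendsto_const_nhds (x := (1:ℝ)) (f := atTop)).add h0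
      rw [add_zero] at this
      refine this.congr fun n => ?_
      have : (0:ℝ) < (n:ℝ) + 2 := by positivity
      field_simp
      ring
    have := (Real.continuous_sqrt.tendsto 1).comp hin
    simpa [Function.comp_def] using this
  refine tendsto_of_tendsto_of_tendsto_of_le_of_le tendsto_const_nhds hub ?_ ?_
  · intro n
    beta_reduce
    have hx : (0:ℝ) < (n:ℝ)/2 + 1 := by positivity
    have hu := gamma_half_upper hx
    have hg2 : (0:ℝ) < Gamma ((n:ℝ)/2 + 3/2) := Real.Gamma_pos_of_pos (by positivity)
    rw [show (n:ℝ)/2 + 3/2 = ((n:ℝ)/2 + 1) + 1/2 by ring] at hg2 ⊢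
    rw [le_div_iff₀ hg2, one_mul]
    calc Gamma ((n:ℝ)/2 + 1 + 1/2) ≤ Gamma ((n:ℝ)/2+1) * Real.sqrt ((n:ℝ)/2+1) := hu
      _ = Real.sqrt ((n:ℝ)/2+1) * Gamma ((n:ℝ)/2+1) := mul_comm _ _
  · intro n
    beta_reduce
    have hx : (0:ℝ) < (n:ℝ)/2 + 1 := by positivity
    have hl := gamma_half_lower hx
    have hg2 : (0:ℝ) < Gamma (((n:ℝ)/2 + 1) + 1/2) := Real.Gamma_pos_of_pos (by positivity)
    have hs : Real.sqrt (((n:ℝ)/2+3/2)/((n:ℝ)/2+1))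
        = Real.sqrt ((n:ℝ)/2+3/2) / Real.sqrt ((n:ℝ)/2+1) :=
      Real.sqrt_div (by positivity) _
    rw [show (n:ℝ)/2 + 3/2 = ((n:ℝ)/2 + 1) + 1/2 by ring] at hs ⊢
    rw [hs, div_le_div_iff₀ hg2 (by positivity)]
    have hss : Real.sqrt ((n:ℝ)/2+1) * Real.sqrt ((n:ℝ)/2+1) = (n:ℝ)/2+1 :=
      Real.mul_self_sqrt hx.le
    nlinarith [Real.sqrt_nonneg ((n:ℝ)/2+1), Real.sqrt_nonneg (((n:ℝ)/2+1) + 1/2),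
      Real.Gamma_pos_of_pos hx, hg2]

end aux

/-- The ratio `gₙ = V_{n+1}/Vₙ` converges to `√(πe/2)` as `n → ∞`. -/
theorem tendsto_ratio_circumscribing_volumes :
    Tendsto (fun n : ℕ => circumVol (n + 1) / circumVol n) atTop
      (nhds (Real.sqrt (π * Real.exp 1 / 2))) := by
  have hmain := ((tendsto_const_nhds (x := Real.sqrt π / 2) (f := atTop (α := ℕ))).mul
    (tendsto_B.mul tendsto_D)).mul tendsto_C
  have hval : Real.sqrt π / 2 * (Real.sqrt (exp 1) * Real.sqrt 2) * 1
      = Real.sqrt (π * Real.exp 1 / 2) := by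
    have hsq : (Real.sqrt π / 2 * (Real.sqrt (exp 1) * Real.sqrt 2)) ^ 2
        = π * Real.exp 1 / 2 := by
      rw [mul_pow, mul_pow, div_pow, sq_sqrt pi_pos.le, sq_sqrt (exp_pos 1).le,
        sq_sqrt (by norm_num : (0:ℝ) ≤ 2)]
      ring
    rw [mul_one, ← hsq, Real.sqrt_sq (by positivity)]
  rw [hval] at hmain
  refine hmain.congr' ?_
  filter_upwards [eventually_ge_atTop 1] with n hn
  exact (ratio_eq hn).symm
end

section
/- The sequence √n · Γ(n/2) / Γ((n+1)/2) converges to √2 as n → ∞. -/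
open Real Filter

/-- Log-convexity of Gamma: `Γ(x+1/2)² ≤ Γ(x) Γ(x+1)` for `x > 0`. -/
lemma gamma_sq_le (x : ℝ) (hx : 0 < x) :
    Real.Gamma (x + 1/2) ^ 2 ≤ Real.Gamma x * Real.Gamma (x + 1) := by
  have h := Real.convexOn_log_Gamma.2 (Set.mem_Ioi.mpr hx)
      (Set.mem_Ioi.mpr (by linarith : (0:ℝ) < x + 1))
      (by norm_num : (0:ℝ) ≤ 1/2) (by norm_num : (0:ℝ) ≤ 1/2) (by norm_num)
  have hmid : (1/2 : ℝ) • x + (1/2 : ℝ) • (x + 1) = x + 1/2 := by ring_nf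
  rw [hmid] at h
  simp only [Function.comp_apply, smul_eq_mul] at h
  have h2 : 2 * Real.log (Real.Gamma (x + 1/2)) ≤
      Real.log (Real.Gamma x * Real.Gamma (x + 1)) := by
    rw [Real.log_mul (Real.Gamma_pos_of_pos hx).ne'
        (Real.Gamma_pos_of_pos (by linarith)).ne']
    linarith
  have hg1 : 0 < Real.Gamma (x + 1/2) := Real.Gamma_pos_of_pos (by linarith)
  have hg2 : 0 < Real.Gamma x * Real.Gamma (x + 1) :=
    mul_pos (Real.Gamma_pos_of_pos hx) (Real.Gamma_pos_of_pos (by linarith))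
  calc Real.Gamma (x + 1/2) ^ 2
      = Real.exp (2 * Real.log (Real.Gamma (x + 1/2))) := by
        rw [mul_comm, Real.exp_mul, Real.exp_log hg1]; norm_num
    _ ≤ Real.exp (Real.log (Real.Gamma x * Real.Gamma (x + 1))) := Real.exp_le_exp.mpr h2
    _ = Real.Gamma x * Real.Gamma (x + 1) := Real.exp_log hg2

/-- The sequence `√n · Γ(n/2) / Γ((n+1)/2)` converges to `√2` as `n → ∞`. -/
theorem tendsto_sqrt_mul_gamma_ratio :
    Tendsto (fun n : ℕ => Real.sqrt n * Real.Gamma ((n : ℝ) / 2) /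
        Real.Gamma (((n : ℝ) + 1) / 2)) atTop (nhds (Real.sqrt 2)) := by
  set a : ℕ → ℝ := fun n => Real.sqrt n * Real.Gamma ((n : ℝ) / 2) /
      Real.Gamma (((n : ℝ) + 1) / 2) with ha
  -- Bounds for n ≥ 2: 2 ≤ aₙ² ≤ 2n/(n-1)
  have key : ∀ n : ℕ, 2 ≤ n → 2 ≤ (a n)^2 ∧ (a n)^2 ≤ 2 * n / (n - 1) := by
    intro n hn
    have hn2 : (2:ℝ) ≤ n := by exact_mod_cast hn
    have hx : (0:ℝ) < (n:ℝ)/2 := by linarith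
    have hg0 : 0 < Real.Gamma ((n:ℝ)/2) := Real.Gamma_pos_of_pos hx
    have hg1 : 0 < Real.Gamma (((n:ℝ)+1)/2) := Real.Gamma_pos_of_pos (by linarith)
    -- upper bound on Γ((n+1)/2)²: ≤ (n/2) Γ(n/2)²
    have hub : Real.Gamma (((n:ℝ)+1)/2)^2 ≤ (n/2) * Real.Gamma ((n:ℝ)/2)^2 := by
      have h := gamma_sq_le ((n:ℝ)/2) hx
      have e1 : (n:ℝ)/2 + 1/2 = ((n:ℝ)+1)/2 := by ring
      have e2 : Real.Gamma ((n:ℝ)/2 + 1) = ((n:ℝ)/2) * Real.Gamma ((n:ℝ)/2) :=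
        Real.Gamma_add_one hx.ne'
      rw [e1, e2] at h
      nlinarith
    -- lower bound: Γ((n+1)/2)² ≥ ((n-1)/2) Γ(n/2)²
    have hlb : ((n:ℝ)-1)/2 * Real.Gamma ((n:ℝ)/2)^2 ≤ Real.Gamma (((n:ℝ)+1)/2)^2 := by
      have hy : (0:ℝ) < ((n:ℝ)-1)/2 := by linarith
      have h := gamma_sq_le (((n:ℝ)-1)/2) hy
      have e1 : ((n:ℝ)-1)/2 + 1/2 = (n:ℝ)/2 := by ring
      have e2 : Real.Gamma (((n:ℝ)-1)/2 + 1) = (((n:ℝ)-1)/2) * Real.Gamma (((n:ℝ)-1)/2) :=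
        Real.Gamma_add_one hy.ne'
      have e3 : Real.Gamma (((n:ℝ)-1)/2 + 1) = Real.Gamma (((n:ℝ)+1)/2) := by
        norm_num; ring_nf
      rw [e1, e2] at h
      have hgy : 0 < Real.Gamma (((n:ℝ)-1)/2) := Real.Gamma_pos_of_pos hy
      -- Γ((n+1)/2) = ((n-1)/2) Γ((n-1)/2)
      have e4 : Real.Gamma (((n:ℝ)+1)/2) = (((n:ℝ)-1)/2) * Real.Gamma (((n:ℝ)-1)/2) := by
        rw [← e3, e2]
      nlinarith [sq_nonneg (Real.Gamma ((n:ℝ)/2))]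
    have hasq : (a n)^2 = (n:ℝ) * Real.Gamma ((n:ℝ)/2)^2 / Real.Gamma (((n:ℝ)+1)/2)^2 := by
      rw [ha]
      have : Real.sqrt (n:ℝ) ^ 2 = (n:ℝ) := Real.sq_sqrt (by linarith)
      field_simp
      ring_nf
      nlinarith [Real.sq_sqrt (show (0:ℝ) ≤ n by linarith)]
    constructor
    · rw [hasq, le_div_iff₀ (by positivity)]
      nlinarith
    · rw [hasq, div_le_div_iff₀ (by positivity) (by linarith)]
      nlinarith
  -- squeeze: a n ^ 2 → 2
  have hsq : Tendsto (fun n : ℕ => (a n)^2) atTop (nhds 2) := by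
    have hupper : Tendsto (fun n : ℕ => 2 * (n:ℝ) / ((n:ℝ) - 1)) atTop (nhds 2) := by
      have h1 : Tendsto (fun n : ℕ => (n:ℝ) - 1) atTop atTop :=
        tendsto_atTop_add_const_right _ _ tendsto_natCast_atTop_atTop
      have h2 : Tendsto (fun n : ℕ => 2 / ((n:ℝ) - 1)) atTop (nhds 0) :=
        tendsto_const_nhds.div_atTop h1
      have h3 : Tendsto (fun n : ℕ => 2 + 2 / ((n:ℝ) - 1)) atTop (nhds (2 + 0)) :=
        tendsto_const_nhds.add h2
      rw [add_zero] at h3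
      refine h3.congr' ?_
      filter_upwards [eventually_ge_atTop 2] with n hn
      have hn2 : (2:ℝ) ≤ n := by exact_mod_cast hn
      have hne : (n:ℝ) - 1 ≠ 0 := by linarith
      field_simp
      ring
    refine tendsto_of_tendsto_of_tendsto_of_le_of_le' tendsto_const_nhds hupper ?_ ?_
    · filter_upwards [eventually_ge_atTop 2] with n hn using (key n hn).1
    · filter_upwards [eventually_ge_atTop 2] with n hn using (key n hn).2
  -- conclude
  have ha_nonneg : ∀ n : ℕ, 0 ≤ a n := by
    intro n
    rw [ha]
    have h1 : 0 < Real.Gamma (((n:ℝ)+1)/2) := Real.Gamma_pos_of_pos (by positivity)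
    by_cases hn : n = 0
    · simp [hn]
    · have hn1 : (1:ℝ) ≤ n := by exact_mod_cast Nat.one_le_iff_ne_zero.mpr hn
      have : 0 < Real.Gamma ((n:ℝ)/2) := Real.Gamma_pos_of_pos (by linarith)
      positivity
  have := (Real.continuous_sqrt.tendsto 2).comp hsq
  refine this.congr fun n => ?_
  simp only [Function.comp_apply]
  exact Real.sqrt_sq (ha_nonneg n)
end
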